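/- Let F₁, F₂ : [a,b] → ℝ be of bounded variation with F₁(a) = F₂(a). Then ∫_a^b f dF₁ ≤ ∫_a^b f dF₂ for all continuous convex f : [a,b] → ℝ if and only if: F₁(b) = F₂(b), ∫_a^b F₁(x) dx = ∫_a^b F₂(x) dx, and ∫_a^x F₁(t) dt ≤ ∫_a^x F₂(t) dt for all x ∈ (a,b). -/

import Mathlib

open Finset

noncomputable def rvar (F : ℝ → ℝ) (c d : ℝ) : ℝ := (eVariationOn F (Set.Icc c d)).toReal

lemma rvar_add {F : ℝ → ℝ} {A B : ℝ} (hF : BoundedVariationOn F (Set.Icc A B))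
    {c d e : ℝ} (hcd : c ≤ d) (hde : d ≤ e) (hA : A ≤ c) (hB : e ≤ B) :
    rvar F c e = rvar F c d + rvar F d e := by
  have h1 : Set.Icc c d ⊆ Set.Icc A B := Set.Icc_subset_Icc hA (hde.trans hB)
  have h2 : Set.Icc d e ⊆ Set.Icc A B := Set.Icc_subset_Icc (hA.trans hcd) hB
  have key := eVariationOn.Icc_add_Icc F (s := Set.univ) hcd hde (Set.mem_univ d)
  simp only [Set.univ_inter] at key
  unfold rvar
  rw [← key, ENNReal.toReal_add (ne_of_lt (lt_of_le_of_lt (eVariationOn.mono F h1) hF.lt_top))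
    (ne_of_lt (lt_of_le_of_lt (eVariationOn.mono F h2) hF.lt_top))]


lemma bv_intervalIntegrable {F : ℝ → ℝ} {A B c d : ℝ} (hF : BoundedVariationOn F (Set.Icc A B))
    (h : Set.uIcc c d ⊆ Set.Icc A B) : IntervalIntegrable F MeasureTheory.volume c d := by
  obtain ⟨p, q, hp, hq, hpq⟩ := hF.locallyBoundedVariationOn.exists_monotoneOn_sub_monotoneOn
  have : F = fun x => p x - q x := by rw [hpq]; rfl
  rw [this]
  exact ((hp.mono h).intervalIntegrable).sub ((hq.mono h).intervalIntegrable)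

lemma rvar_dist {F : ℝ → ℝ} {c d x y : ℝ} (hF : BoundedVariationOn F (Set.Icc c d))
    (hx : x ∈ Set.Icc c d) (hy : y ∈ Set.Icc c d) : |F x - F y| ≤ rvar F c d := by
  have := hF.dist_le hx hy
  rwa [Real.dist_eq] at this

lemma chain_mono (u : ℕ → ℝ) (m : ℕ) (hu : ∀ i < m, u i ≤ u (i + 1)) :
    ∀ i j, i ≤ j → j ≤ m → u i ≤ u j := by
  intro i j hij hjm
  induction j with
  | zero => simp_all
  | succ k ih =>
    rcases Nat.lt_or_ge i (k + 1) with hk | hk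
    · exact le_trans (ih (Nat.lt_succ_iff.mp hk) (le_trans (Nat.le_succ k) hjm))
        (hu k (Nat.lt_of_succ_le hjm))
    · have : i = k + 1 := le_antisymm hij hk
      simp [this]

-- single interval bound
lemma single_err {F : ℝ → ℝ} {c d : ℝ} (hcd : c ≤ d) (hF : BoundedVariationOn F (Set.Icc c d))
    (hint : IntervalIntegrable F MeasureTheory.volume c d)
    {τ : ℝ} (hτ : τ ∈ Set.Icc c d) :
    |F τ * (d - c) - ∫ t in c..d, F t| ≤ (d - c) * rvar F c d := by
  have h1 : F τ * (d - c) = ∫ _t in c..d, F τ := by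
    rw [intervalIntegral.integral_const, smul_eq_mul]; ring
  rw [h1, ← intervalIntegral.integral_sub (intervalIntegrable_const) hint]
  have := intervalIntegral.norm_integral_le_of_norm_le_const
    (f := fun t => F τ - F t) (C := rvar F c d) (a := c) (b := d) ?_
  · rw [Real.norm_eq_abs] at this
    calc _ ≤ rvar F c d * |d - c| := this
    _ = (d - c) * rvar F c d := by rw [abs_of_nonneg (by linarith)]; ring
  · intro x hx
    rw [Set.uIoc_of_le hcd] at hx
    rw [Real.norm_eq_abs]
    exact rvar_dist hF hτ ⟨le_of_lt hx.1, hx.2⟩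

lemma riemann_sum_err {F : ℝ → ℝ} {A B : ℝ} (hF : BoundedVariationOn F (Set.Icc A B))
    (u τ : ℕ → ℝ) (m : ℕ) (h : ℝ)
    (humono : ∀ i < m, u i ≤ u (i + 1))
    (hA : A ≤ u 0) (hB : u m ≤ B)
    (hstep : ∀ i < m, u (i + 1) - u i ≤ h)
    (hτ : ∀ i < m, τ i ∈ Set.Icc (u i) (u (i + 1))) :
    |∑ i ∈ range m, F (τ i) * (u (i + 1) - u i) - ∫ t in (u 0)..(u m), F t|
      ≤ h * ∑ i ∈ range m, rvar F (u i) (u (i + 1)) := by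
  induction m with
  | zero => simp
  | succ k ih =>
    have hmono' : ∀ i j, i ≤ j → j ≤ k + 1 → u i ≤ u j := chain_mono u (k + 1) humono
    have hsub : ∀ i j, i ≤ j → j ≤ k + 1 → Set.Icc (u i) (u j) ⊆ Set.Icc A B := by
      intro i j hij hjm
      exact Set.Icc_subset_Icc (le_trans hA (hmono' 0 i (Nat.zero_le i) (le_trans hij hjm)))
        (le_trans (hmono' j (k+1) hjm le_rfl) hB)
    have hukk : u k ≤ u (k + 1) := humono k (Nat.lt_succ_self k)
    have hu0k : u 0 ≤ u k := hmono' 0 k (Nat.zero_le k) (Nat.le_succ k)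
    have int1 : IntervalIntegrable F MeasureTheory.volume (u 0) (u k) :=
      bv_intervalIntegrable hF (by rw [Set.uIcc_of_le hu0k]; exact hsub 0 k (Nat.zero_le k) (Nat.le_succ k))
    have int2 : IntervalIntegrable F MeasureTheory.volume (u k) (u (k + 1)) :=
      bv_intervalIntegrable hF (by rw [Set.uIcc_of_le hukk]; exact hsub k (k+1) (Nat.le_succ k) le_rfl)
    rw [Finset.sum_range_succ, Finset.sum_range_succ,
      ← intervalIntegral.integral_add_adjacent_intervals int1 int2]
    have e1 := ih (fun i hi => humono i (Nat.lt_succ_of_lt hi)) (hukk.trans hB)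
      (fun i hi => hstep i (Nat.lt_succ_of_lt hi)) (fun i hi => hτ i (Nat.lt_succ_of_lt hi))
    have e2 := single_err hukk (hF.mono (hsub k (k+1) (Nat.le_succ k) le_rfl)) int2
      (hτ k (Nat.lt_succ_self k))
    have hh : 0 ≤ h := le_trans (by linarith) (hstep k (Nat.lt_succ_self k))
    have e3 : (u (k+1) - u k) * rvar F (u k) (u (k+1)) ≤ h * rvar F (u k) (u (k+1)) := by
      apply mul_le_mul_of_nonneg_right (hstep k (Nat.lt_succ_self k)) ENNReal.toReal_nonneg
    calc |(∑ i ∈ range k, F (τ i) * (u (i + 1) - u i) + F (τ k) * (u (k + 1) - u k))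
          - ((∫ t in (u 0)..(u k), F t) + ∫ t in (u k)..(u (k+1)), F t)|
        ≤ |∑ i ∈ range k, F (τ i) * (u (i + 1) - u i) - ∫ t in (u 0)..(u k), F t|
          + |F (τ k) * (u (k + 1) - u k) - ∫ t in (u k)..(u (k+1)), F t| := by
          apply le_trans (le_of_eq (congrArg abs (by ring))) (abs_add_le _ _)
      _ ≤ h * ∑ i ∈ range k, rvar F (u i) (u (i + 1)) + h * rvar F (u k) (u (k+1)) := by
          exact add_le_add e1 (le_trans e2 e3)
      _ = h * (∑ i ∈ range k, rvar F (u i) (u (i + 1)) + rvar F (u k) (u (k+1))) := by ring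

lemma rvar_sum_le {F : ℝ → ℝ} {A B : ℝ} (hF : BoundedVariationOn F (Set.Icc A B))
    (u : ℕ → ℝ) (m : ℕ)
    (humono : ∀ i < m, u i ≤ u (i + 1)) (hA : A ≤ u 0) (hB : u m ≤ B) :
    ∑ i ∈ range m, rvar F (u i) (u (i + 1)) ≤ rvar F (u 0) (u m) := by
  induction m with
  | zero => simp [rvar]
  | succ k ih =>
    have hmono' : ∀ i j, i ≤ j → j ≤ k + 1 → u i ≤ u j := chain_mono u (k + 1) humono
    have hukk : u k ≤ u (k + 1) := humono k (Nat.lt_succ_self k)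
    rw [Finset.sum_range_succ]
    have step : rvar F (u 0) (u (k+1)) = rvar F (u 0) (u k) + rvar F (u k) (u (k+1)) := by
      refine rvar_add hF (hmono' 0 k (Nat.zero_le k) (Nat.le_succ k)) hukk hA hB
    rw [step]
    exact add_le_add (ih (fun i hi => humono i (Nat.lt_succ_of_lt hi)) (hukk.trans hB)) le_rfl

-- Abel summation
lemma abel_sum (u v : ℕ → ℝ) (n : ℕ) (hn : 0 < n) :
    ∑ i ∈ range n, u i * (v (i + 1) - v i)
      = u (n - 1) * v n - u 0 * v 0 - ∑ i ∈ range (n - 1), (u (i + 1) - u i) * v (i + 1) := by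
  obtain ⟨m, rfl⟩ : ∃ m, n = m + 1 := ⟨n - 1, (Nat.succ_pred_eq_of_pos hn).symm⟩
  simp only [Nat.add_sub_cancel]
  have key : ∑ i ∈ range m, (u i * (v (i + 1) - v i) + (u (i + 1) - u i) * v (i + 1))
      = ∑ i ∈ range m, (u (i + 1) * v (i + 1) - u i * v i) := by
    apply Finset.sum_congr rfl; intro i _; ring
  rw [Finset.sum_add_distrib] at key
  rw [Finset.sum_range_sub (fun i => u i * v i)] at key
  rw [Finset.sum_range_succ]
  have := key
  linarith [this]
def IsRSIntegral (f F : ℝ → ℝ) (a b : ℝ) (I : ℝ) : Prop :=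
  ∀ ε > (0:ℝ), ∃ δ > (0:ℝ), ∀ (n : ℕ) (t : ℕ → ℝ) (ξ : ℕ → ℝ),
    0 < n → t 0 = a → t n = b →
    (∀ i < n, t i < t (i + 1)) →
    (∀ i < n, t (i + 1) - t i < δ) →
    (∀ i < n, ξ i ∈ Set.Icc (t i) (t (i + 1))) →
    |(∑ i ∈ range n, f (ξ i) * (F (t (i + 1)) - F (t i))) - I| < ε

lemma isRS_const (c : ℝ) (F : ℝ → ℝ) (a b : ℝ) :
    IsRSIntegral (fun _ => c) F a b (c * (F b - F a)) := by
  intro ε hε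
  refine ⟨1, one_pos, fun n t ξ hn h0 hb _ _ _ => ?_⟩
  have : ∑ i ∈ range n, c * (F (t (i + 1)) - F (t i))
      = c * (F (t n) - F (t 0)) := by
    rw [← Finset.mul_sum, Finset.sum_range_sub (fun i => F (t i))]
  rw [this, h0, hb, sub_self, abs_zero]
  exact hε
lemma isRS_neg {f F : ℝ → ℝ} {a b I : ℝ} (h : IsRSIntegral f F a b I) :
    IsRSIntegral (fun x => -(f x)) F a b (-I) := by
  intro ε hε
  obtain ⟨δ, hδ, hd⟩ := h ε hε
  refine ⟨δ, hδ, fun n t ξ hn h0 hb ht hm hξ => ?_⟩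
  have := hd n t ξ hn h0 hb ht hm hξ
  have e : ∑ i ∈ range n, -f (ξ i) * (F (t (i + 1)) - F (t i))
      = -(∑ i ∈ range n, f (ξ i) * (F (t (i + 1)) - F (t i))) := by
    rw [← Finset.sum_neg_distrib]; apply Finset.sum_congr rfl; intro i _; ring
  rw [e, ← abs_neg]
  convert this using 2
  ring

lemma uniform_partition (a b : ℝ) (hab : a < b) (n : ℕ) (hn : 0 < n) :
    ∃ t : ℕ → ℝ, t 0 = a ∧ t n = b ∧ (∀ i, t (i + 1) - t i = (b - a) / n) ∧
      (∀ i < n, t i < t (i + 1)) ∧ (∀ i, i ≤ n → t i ∈ Set.Icc a b) := by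
  have hn' : (n:ℝ) ≠ 0 := by exact_mod_cast hn.ne'
  have hn'' : (0:ℝ) < n := by exact_mod_cast hn
  have hstep : ∀ i : ℕ, (a + (b - a) * ↑(i+1) / n) - (a + (b - a) * i / n) = (b - a) / n := by
    intro i; push_cast; field_simp; ring
  refine ⟨fun i => a + (b - a) * i / n, by simp, by field_simp; ring, hstep, ?_, ?_⟩
  · intro i _
    have h : (0:ℝ) < (b - a) / n := div_pos (by linarith) hn''
    have := hstep i
    simp only
    linarith
  · intro i hi
    have hi' : (0:ℝ) ≤ i := by positivity
    have h1 : (0:ℝ) ≤ (b - a) * i / n := by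
      apply div_nonneg (mul_nonneg (by linarith) hi') (le_of_lt hn'')
    have h2 : (b - a) * i / n ≤ b - a := by
      rw [div_le_iff₀ hn'']
      have : (i:ℝ) ≤ n := by exact_mod_cast hi
      nlinarith
    exact ⟨by simp only; linarith, by simp only; linarith⟩
lemma bv_bound {F : ℝ → ℝ} {a b : ℝ} (hab : a ≤ b) (hF : BoundedVariationOn F (Set.Icc a b)) :
    ∀ x ∈ Set.Icc a b, |F x| ≤ |F a| + rvar F a b := by
  intro x hx
  have := rvar_dist hF hx (Set.left_mem_Icc.mpr hab)
  calc |F x| = |F a + (F x - F a)| := by ring_nf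
  _ ≤ |F a| + |F x - F a| := abs_add_le _ _
  _ ≤ |F a| + rvar F a b := by linarith

lemma uIcc_sub {a b c d : ℝ} (hc : c ∈ Set.Icc a b) (hd : d ∈ Set.Icc a b) :
    Set.uIcc c d ⊆ Set.Icc a b := Set.uIcc_subset_Icc hc hd

lemma integral_bound {F : ℝ → ℝ} {a b c d M : ℝ}
    (hM : ∀ x ∈ Set.Icc a b, |F x| ≤ M) (hc : c ∈ Set.Icc a b) (hd : d ∈ Set.Icc a b) :
    |∫ t in c..d, F t| ≤ M * |d - c| := by
  have := intervalIntegral.norm_integral_le_of_norm_le_const (f := F) (C := M) (a := c) (b := d) ?_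
  · exact this
  · intro x hx
    have hx' : x ∈ Set.uIcc c d := by
      rw [Set.uIoc] at hx
      rw [Set.uIcc]
      exact Set.Ioc_subset_Icc_self hx
    exact hM x (uIcc_sub hc hd hx')
section
variable {F : ℝ → ℝ} {a b : ℝ}

theorem isRS_id (hab : a < b) (hF : BoundedVariationOn F (Set.Icc a b)) :
    IsRSIntegral (fun x => x) F a b (b * F b - a * F a - ∫ x in a..b, F x) := by
  set V := rvar F a b with hV
  set M := |F a| + V with hM
  have hV0 : 0 ≤ V := ENNReal.toReal_nonneg
  have hM0 : 0 ≤ M := by positivity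
  have hMb := bv_bound (le_of_lt hab) hF
  intro ε hε
  set C := 4 * M + 2 * V + 1 with hC
  have hC0 : 0 < C := by positivity
  refine ⟨ε / C, by positivity, fun n t ξ hn h0 hb ht hm hξ => ?_⟩
  set δ := ε / C with hδ
  have hδ0 : 0 < δ := by positivity
  -- t is monotone
  have tmono : ∀ i j, i ≤ j → j ≤ n → t i ≤ t j :=
    chain_mono t n (fun i hi => le_of_lt (ht i hi))
  have tmem : ∀ i, i ≤ n → t i ∈ Set.Icc a b := by
    intro i hi
    exact ⟨h0 ▸ tmono 0 i (Nat.zero_le i) hi, hb ▸ tmono i n hi le_rfl⟩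
  have ξmem : ∀ i, i < n → ξ i ∈ Set.Icc a b := by
    intro i hi
    obtain ⟨h1, h2⟩ := hξ i hi
    exact ⟨le_trans (tmem i (le_of_lt hi)).1 h1, le_trans h2 (tmem (i+1) hi).2⟩
  have hn1 : n - 1 + 1 = n := Nat.succ_pred_eq_of_pos hn
  have hn1' : n - 1 < n := Nat.sub_lt hn one_pos
  -- Abel summation
  have habel := abel_sum (fun i => ξ i) (fun i => F (t i)) n hn
  -- Riemann sum part
  have hξmono : ∀ i < n - 1, ξ i ≤ ξ (i + 1) := by
    intro i hi
    have hi' : i < n := lt_of_lt_of_le (Nat.lt_succ_of_lt hi) (le_of_eq hn1)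
    have hi2 : i + 1 < n := by omega
    exact le_trans (hξ i hi').2 (hξ (i+1) hi2).1
  have hξstep : ∀ i < n - 1, ξ (i + 1) - ξ i ≤ 2 * δ := by
    intro i hi
    have hi' : i < n := by omega
    have hi2 : i + 1 < n := by omega
    have := (hξ i hi').1
    have := (hξ (i+1) hi2).2
    have := hm i hi'
    have := hm (i+1) hi2
    linarith
  have hA : a ≤ ξ 0 := h0 ▸ (hξ 0 hn).1
  have hBb : ξ (n - 1) ≤ b := by
    have := (hξ (n-1) hn1').2
    rwa [hn1, hb] at this
  have hrs := riemann_sum_err hF ξ (fun i => t (i + 1)) (n - 1) (2 * δ)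
    hξmono hA hBb hξstep
    (fun i hi => ⟨(hξ i (by omega)).2, (hξ (i+1) (by omega)).1⟩)
  have hsumle := rvar_sum_le hF ξ (n - 1) hξmono hA hBb
  have hrvm : rvar F (ξ 0) (ξ (n-1)) ≤ V := by
    rw [hV]
    exact ENNReal.toReal_mono hF (eVariationOn.mono F
      (Set.Icc_subset_Icc hA hBb))
  have hrs2 : |∑ i ∈ range (n-1), F (t (i + 1)) * (ξ (i + 1) - ξ i)
      - ∫ s in (ξ 0)..(ξ (n-1)), F s| ≤ 2 * δ * V := by
    calc _ ≤ 2 * δ * ∑ i ∈ range (n-1), rvar F (ξ i) (ξ (i+1)) := hrs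
    _ ≤ 2 * δ * V := by
      apply mul_le_mul_of_nonneg_left (le_trans hsumle hrvm) (by positivity)
  -- integral splitting
  have hξ0mem : ξ 0 ∈ Set.Icc a b := ξmem 0 hn
  have hξnmem : ξ (n-1) ∈ Set.Icc a b := ξmem (n-1) hn1'
  have int1 : IntervalIntegrable F MeasureTheory.volume a (ξ 0) :=
    bv_intervalIntegrable hF (uIcc_sub (Set.left_mem_Icc.mpr (le_of_lt hab)) hξ0mem)
  have int2 : IntervalIntegrable F MeasureTheory.volume (ξ 0) (ξ (n-1)) :=
    bv_intervalIntegrable hF (uIcc_sub hξ0mem hξnmem)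
  have int3 : IntervalIntegrable F MeasureTheory.volume (ξ (n-1)) b :=
    bv_intervalIntegrable hF (uIcc_sub hξnmem (Set.right_mem_Icc.mpr (le_of_lt hab)))
  have hsplit : (∫ x in a..b, F x) = (∫ x in a..(ξ 0), F x) + (∫ x in (ξ 0)..(ξ (n-1)), F x)
      + ∫ x in (ξ (n-1))..b, F x := by
    rw [intervalIntegral.integral_add_adjacent_intervals int1 int2,
      intervalIntegral.integral_add_adjacent_intervals (int1.trans int2) int3]
  -- small bounds
  have hends1 : |∫ x in a..(ξ 0), F x| ≤ M * δ := by
    have h1 := integral_bound hMb (Set.left_mem_Icc.mpr (le_of_lt hab)) hξ0mem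
    have h2 : |ξ 0 - a| ≤ δ := by
      rw [abs_of_nonneg (by linarith)]
      have := (hξ 0 hn).2
      have := hm 0 hn
      rw [h0] at *
      linarith
    calc _ ≤ M * |ξ 0 - a| := h1
    _ ≤ M * δ := mul_le_mul_of_nonneg_left h2 hM0
  have hends2 : |∫ x in (ξ (n-1))..b, F x| ≤ M * δ := by
    have h1 := integral_bound hMb hξnmem (Set.right_mem_Icc.mpr (le_of_lt hab))
    have h2 : |b - ξ (n-1)| ≤ δ := by
      rw [abs_of_nonneg (by linarith)]
      have h3 := (hξ (n-1) hn1').1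
      have h4 := hm (n-1) hn1'
      rw [hn1, hb] at h4
      linarith
    calc _ ≤ M * |b - ξ (n-1)| := h1
    _ ≤ M * δ := mul_le_mul_of_nonneg_left h2 hM0
  have hFbb : |F b| ≤ M := hMb b (Set.right_mem_Icc.mpr (le_of_lt hab))
  have hFaa : |F a| ≤ M := hMb a (Set.left_mem_Icc.mpr (le_of_lt hab))
  have hend3 : |ξ (n-1) * F (t n) - b * F b| ≤ δ * M := by
    rw [hb]
    have h2 : |ξ (n-1) - b| ≤ δ := by
      rw [abs_of_nonpos (by linarith)]
      have h3 := (hξ (n-1) hn1').1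
      have h4 := hm (n-1) hn1'
      rw [hn1, hb] at h4
      linarith
    calc |ξ (n-1) * F b - b * F b| = |ξ (n-1) - b| * |F b| := by rw [← abs_mul]; ring_nf
    _ ≤ δ * M := mul_le_mul h2 hFbb (abs_nonneg _) (le_of_lt hδ0)
  have hend4 : |ξ 0 * F (t 0) - a * F a| ≤ δ * M := by
    rw [h0]
    have h2 : |ξ 0 - a| ≤ δ := by
      rw [abs_of_nonneg (by linarith)]
      have := (hξ 0 hn).2
      have := hm 0 hn
      rw [h0] at *
      linarith
    calc |ξ 0 * F a - a * F a| = |ξ 0 - a| * |F a| := by rw [← abs_mul]; ring_nf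
    _ ≤ δ * M := mul_le_mul h2 hFaa (abs_nonneg _) (le_of_lt hδ0)
  -- combine
  have key : |(∑ i ∈ range n, ξ i * (F (t (i + 1)) - F (t i)))
      - (b * F b - a * F a - ∫ x in a..b, F x)| ≤ 4 * M * δ + 2 * δ * V := by
    rw [habel, hsplit]
    have expand : ξ (n - 1) * F (t n) - ξ 0 * F (t 0)
        - ∑ i ∈ range (n - 1), (ξ (i + 1) - ξ i) * F (t (i + 1))
        - (b * F b - a * F a - ((∫ x in a..(ξ 0), F x) + (∫ x in (ξ 0)..(ξ (n-1)), F x)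
          + ∫ x in (ξ (n-1))..b, F x))
      = (ξ (n-1) * F (t n) - b * F b) - (ξ 0 * F (t 0) - a * F a)
        - (∑ i ∈ range (n - 1), F (t (i + 1)) * (ξ (i + 1) - ξ i)
            - ∫ x in (ξ 0)..(ξ (n-1)), F x)
        + (∫ x in a..(ξ 0), F x) + ∫ x in (ξ (n-1))..b, F x := by
      rw [Finset.sum_congr rfl (fun i _ => by ring :
        ∀ i ∈ range (n-1), (ξ (i + 1) - ξ i) * F (t (i + 1)) = F (t (i + 1)) * (ξ (i + 1) - ξ i))]
      ring
    rw [expand]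
    calc _ ≤ |(ξ (n-1) * F (t n) - b * F b)| + |(ξ 0 * F (t 0) - a * F a)|
        + |∑ i ∈ range (n - 1), F (t (i + 1)) * (ξ (i + 1) - ξ i)
            - ∫ x in (ξ 0)..(ξ (n-1)), F x|
        + |∫ x in a..(ξ 0), F x| + |∫ x in (ξ (n-1))..b, F x| := by
          have t1 := abs_add_le (ξ (n-1) * F (t n) - b * F b
              - (ξ 0 * F (t 0) - a * F a)
              - (∑ i ∈ range (n - 1), F (t (i + 1)) * (ξ (i + 1) - ξ i)
                - ∫ x in (ξ 0)..(ξ (n-1)), F x)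
              + (∫ x in a..(ξ 0), F x)) (∫ x in (ξ (n-1))..b, F x)
          have t2 := abs_add_le (ξ (n-1) * F (t n) - b * F b
              - (ξ 0 * F (t 0) - a * F a)
              - (∑ i ∈ range (n - 1), F (t (i + 1)) * (ξ (i + 1) - ξ i)
                - ∫ x in (ξ 0)..(ξ (n-1)), F x)) (∫ x in a..(ξ 0), F x)
          have t3 := abs_sub (ξ (n-1) * F (t n) - b * F b
              - (ξ 0 * F (t 0) - a * F a))
              (∑ i ∈ range (n - 1), F (t (i + 1)) * (ξ (i + 1) - ξ i)
                - ∫ x in (ξ 0)..(ξ (n-1)), F x)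
          have t4 := abs_sub (ξ (n-1) * F (t n) - b * F b) (ξ 0 * F (t 0) - a * F a)
          linarith
    _ ≤ δ * M + δ * M + 2 * δ * V + M * δ + M * δ := by
        exact add_le_add (add_le_add (add_le_add (add_le_add hend3 hend4) hrs2) hends1) hends2
    _ = 4 * M * δ + 2 * δ * V := by ring
  calc |(∑ i ∈ range n, ξ i * (F (t (i + 1)) - F (t i)))
      - (b * F b - a * F a - ∫ x in a..b, F x)| ≤ 4 * M * δ + 2 * δ * V := key
  _ < δ * C := by rw [hC]; nlinarith
  _ = ε := by rw [hδ]; field_simp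
end
section
variable {F : ℝ → ℝ} {a b : ℝ}

set_option maxHeartbeats 1000000 in
theorem isRS_hinge (hab : a < b) {c : ℝ} (hc : c ∈ Set.Ioo a b)
    (hF : BoundedVariationOn F (Set.Icc a b)) :
    IsRSIntegral (fun x => max (x - c) 0) F a b ((b - c) * F b - ∫ x in c..b, F x) := by
  obtain ⟨hac, hcb⟩ := hc
  set V := rvar F a b with hV
  set M := |F a| + V with hM
  have hV0 : 0 ≤ V := ENNReal.toReal_nonneg
  have hM0 : 0 ≤ M := by positivity
  have hMb := bv_bound (le_of_lt hab) hF
  intro ε hε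
  set C := 6 * M + 2 * V + 1 with hC
  have hC0 : 0 < C := by positivity
  refine ⟨min (ε / C) (min (c - a) (b - c)), lt_min (by positivity) (lt_min (by linarith) (by linarith)), fun n t ξ hn h0 hb ht hm hξ => ?_⟩
  set δ := min (ε / C) (min (c - a) (b - c)) with hδ
  have hδ0 : 0 < δ := lt_min (by positivity) (lt_min (by linarith) (by linarith))
  have hδε : δ ≤ ε / C := min_le_left _ _
  have hδca : δ ≤ c - a := le_trans (min_le_right _ _) (min_le_left _ _)
  have hδbc : δ ≤ b - c := le_trans (min_le_right _ _) (min_le_right _ _)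
  have tmono : ∀ i j, i ≤ j → j ≤ n → t i ≤ t j :=
    chain_mono t n (fun i hi => le_of_lt (ht i hi))
  have tmem : ∀ i, i ≤ n → t i ∈ Set.Icc a b := by
    intro i hi
    exact ⟨h0 ▸ tmono 0 i (Nat.zero_le i) hi, hb ▸ tmono i n hi le_rfl⟩
  have ξmem : ∀ i, i < n → ξ i ∈ Set.Icc a b := by
    intro i hi
    obtain ⟨h1, h2⟩ := hξ i hi
    exact ⟨le_trans (tmem i (le_of_lt hi)).1 h1, le_trans h2 (tmem (i+1) hi).2⟩
  have hn1 : n - 1 + 1 = n := Nat.succ_pred_eq_of_pos hn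
  have hn1' : n - 1 < n := Nat.sub_lt hn one_pos
  -- key endpoint facts
  have hξ0c : ξ 0 < c := by
    have h1 := (hξ 0 hn).2
    have h2 := hm 0 hn
    rw [h0] at h2
    linarith
  have hξnc : c ≤ ξ (n - 1) := by
    have h1 := (hξ (n-1) hn1').1
    have h2 := hm (n-1) hn1'
    rw [hn1, hb] at h2
    linarith
  set v : ℕ → ℝ := fun i => max (ξ i) c with hv
  set τ : ℕ → ℝ := fun i => max (t (i + 1)) c with hτdef
  have hfv : ∀ x : ℝ, max (x - c) 0 = max x c - c := by
    intro x
    rcases le_total x c with h | h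
    · rw [max_eq_right (by linarith), max_eq_right h]; ring
    · rw [max_eq_left (by linarith), max_eq_left h]
  have hv0 : v 0 = c := by simp only [hv]; exact max_eq_right (le_of_lt hξ0c)
  have hvn : v (n - 1) = ξ (n - 1) := max_eq_left hξnc
  -- Abel
  have habel := abel_sum (fun i => max (ξ i - c) 0) (fun i => F (t i)) n hn
  have hξmono : ∀ i < n - 1, ξ i ≤ ξ (i + 1) := by
    intro i hi
    have hi' : i < n := by omega
    have hi2 : i + 1 < n := by omega
    exact le_trans (hξ i hi').2 (hξ (i+1) hi2).1
  have hvmono : ∀ i < n - 1, v i ≤ v (i + 1) :=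
    fun i hi => max_le_max_right c (hξmono i hi)
  have hξstep : ∀ i < n - 1, ξ (i + 1) - ξ i ≤ 2 * δ := by
    intro i hi
    have hi' : i < n := by omega
    have hi2 : i + 1 < n := by omega
    have h1 := (hξ i hi').1
    have h2 := (hξ (i+1) hi2).2
    have h3 := hm i hi'
    have h4 := hm (i+1) hi2
    linarith
  have hvstep : ∀ i < n - 1, v (i + 1) - v i ≤ 2 * δ := by
    intro i hi
    have h1 := hξstep i hi
    have h2 : v (i+1) - v i ≤ ξ (i+1) - ξ i := by
      simp only [hv]
      rcases le_total (ξ (i+1)) c with h | h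
      · rw [max_eq_right h]
        have := max_le_max_right c (hξmono i hi)
        rw [max_eq_right h] at this
        have h5 : ξ i ≤ max (ξ i) c := le_max_left _ _
        have := hξmono i hi
        nlinarith [le_max_left (ξ i) c, le_max_right (ξ i) c]
      · rw [max_eq_left h]
        have h5 : ξ i ≤ max (ξ i) c := le_max_left _ _
        linarith
    linarith
  have hvA : a ≤ v 0 := by rw [hv0]; linarith
  have hvB : v (n - 1) ≤ b := by rw [hvn]; exact (ξmem (n-1) hn1').2
  have hvτ : ∀ i < n - 1, τ i ∈ Set.Icc (v i) (v (i + 1)) := by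
    intro i hi
    have hi' : i < n := by omega
    have hi2 : i + 1 < n := by omega
    constructor
    · exact max_le_max_right c (hξ i hi').2
    · exact max_le_max_right c (hξ (i+1) hi2).1
  have hrs := riemann_sum_err hF v τ (n - 1) (2 * δ) hvmono hvA hvB hvstep hvτ
  have hsumle := rvar_sum_le hF v (n - 1) hvmono hvA hvB
  have hrvm : rvar F (v 0) (v (n-1)) ≤ V := by
    rw [hV]
    exact ENNReal.toReal_mono hF (eVariationOn.mono F (Set.Icc_subset_Icc hvA hvB))
  have hrs2 : |∑ i ∈ range (n-1), F (τ i) * (v (i + 1) - v i)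
      - ∫ s in (v 0)..(v (n-1)), F s| ≤ 2 * δ * V := by
    calc _ ≤ 2 * δ * ∑ i ∈ range (n-1), rvar F (v i) (v (i+1)) := hrs
    _ ≤ 2 * δ * V := mul_le_mul_of_nonneg_left (le_trans hsumle hrvm) (by positivity)
  -- correction term
  have hE : |∑ i ∈ range (n-1), (v (i + 1) - v i) * F (t (i + 1))
      - ∑ i ∈ range (n-1), F (τ i) * (v (i + 1) - v i)| ≤ 4 * M * δ := by
    have heq : ∑ i ∈ range (n-1), (v (i + 1) - v i) * F (t (i + 1))
        - ∑ i ∈ range (n-1), F (τ i) * (v (i + 1) - v i)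
        = ∑ i ∈ range (n-1), (F (t (i + 1)) - F (τ i)) * (v (i + 1) - v i) := by
      rw [← Finset.sum_sub_distrib]
      exact Finset.sum_congr rfl (fun i _ => by ring)
    rw [heq]
    have hterm : ∀ i ∈ range (n-1),
        |(F (t (i + 1)) - F (τ i)) * (v (i + 1) - v i)|
          ≤ (4 * M * δ) * (if t (i+1) < c ∧ c < ξ (i+1) then 1 else 0) := by
      intro i hir
      have hi : i < n - 1 := Finset.mem_range.mp hir
      have hi' : i < n := by omega
      have hi2 : i + 1 < n := by omega
      by_cases hP : t (i+1) < c ∧ c < ξ (i+1)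
      · rw [if_pos hP, mul_one, abs_mul]
        have hb1 : |F (t (i + 1)) - F (τ i)| ≤ 2 * M := by
          have m1 : t (i+1) ∈ Set.Icc a b := tmem (i+1) (by omega)
          have m2 : τ i ∈ Set.Icc a b := by
            simp only [hτdef]
            rcases le_total (t (i+1)) c with h | h
            · rw [max_eq_right h]; exact ⟨le_of_lt hac, le_of_lt hcb⟩
            · rw [max_eq_left h]; exact m1
          have := hMb _ m1
          have := hMb _ m2
          calc |F (t (i + 1)) - F (τ i)| ≤ |F (t (i+1))| + |F (τ i)| := abs_sub _ _
          _ ≤ 2 * M := by rw [hM] at *; linarith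
        have hb2 : |v (i + 1) - v i| ≤ 2 * δ := by
          rw [abs_of_nonneg (by linarith [hvmono i hi])]
          exact hvstep i hi
        calc |F (t (i + 1)) - F (τ i)| * |v (i + 1) - v i|
            ≤ (2*M) * (2*δ) := mul_le_mul hb1 hb2 (abs_nonneg _) (by positivity)
          _ = 4 * M * δ := by ring
      · rw [if_neg hP, mul_zero]
        have hzero : (F (t (i + 1)) - F (τ i)) * (v (i + 1) - v i) = 0 := by
          rcases le_or_gt c (t (i+1)) with h | h
          · have : τ i = t (i+1) := max_eq_left h
            rw [this, sub_self, zero_mul]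
          · have h2 : ξ (i+1) ≤ c := by
              by_contra h3
              push_neg at h3
              exact hP ⟨h, h3⟩
            have hvv : v (i+1) = c := max_eq_right h2
            have hvv2 : v i = c := by
              have := hξmono i hi
              exact max_eq_right (by linarith)
            rw [hvv, hvv2, sub_self, mul_zero]
        rw [hzero, abs_zero]
    have hcard : ∑ i ∈ range (n-1), (if t (i+1) < c ∧ c < ξ (i+1) then (1:ℝ) else 0) ≤ 1 := by
      rw [← Finset.sum_filter]
      simp only [Finset.sum_const, nsmul_eq_mul, mul_one]
      have : ((range (n-1)).filter (fun i => t (i+1) < c ∧ c < ξ (i+1))).card ≤ 1 := by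
        rw [Finset.card_le_one]
        intro i hif j hjf
        rw [Finset.mem_filter, Finset.mem_range] at hif hjf
        by_contra hne
        rcases Nat.lt_or_ge i j with hij | hij
        · have h1 : ξ (i+1) ≤ t (i+2) := (hξ (i+1) (by omega)).2
          have h2 : t (i+2) ≤ t (j+1) := tmono (i+2) (j+1) (by omega) (by omega)
          linarith [hif.2.2, hjf.2.1]
        · have hij' : j < i := by omega
          have h1 : ξ (j+1) ≤ t (j+2) := (hξ (j+1) (by omega)).2
          have h2 : t (j+2) ≤ t (i+1) := tmono (j+2) (i+1) (by omega) (by omega)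
          linarith [hjf.2.2, hif.2.1]
      exact_mod_cast this
    calc |∑ i ∈ range (n-1), (F (t (i + 1)) - F (τ i)) * (v (i + 1) - v i)|
        ≤ ∑ i ∈ range (n-1), |(F (t (i + 1)) - F (τ i)) * (v (i + 1) - v i)| :=
          Finset.abs_sum_le_sum_abs _ _
    _ ≤ ∑ i ∈ range (n-1), (4 * M * δ) * (if t (i+1) < c ∧ c < ξ (i+1) then 1 else 0) :=
          Finset.sum_le_sum hterm
    _ = (4 * M * δ) * ∑ i ∈ range (n-1), (if t (i+1) < c ∧ c < ξ (i+1) then (1:ℝ) else 0) := by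
          rw [Finset.mul_sum]
    _ ≤ (4 * M * δ) * 1 := mul_le_mul_of_nonneg_left hcard (by positivity)
    _ = 4 * M * δ := mul_one _
  -- integral splitting
  have hξnmem : ξ (n-1) ∈ Set.Icc a b := ξmem (n-1) hn1'
  have hcmem : c ∈ Set.Icc a b := ⟨le_of_lt hac, le_of_lt hcb⟩
  have hbmem : b ∈ Set.Icc a b := Set.right_mem_Icc.mpr (le_of_lt hab)
  have int1 : IntervalIntegrable F MeasureTheory.volume c (ξ (n-1)) :=
    bv_intervalIntegrable hF (uIcc_sub hcmem hξnmem)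
  have int2 : IntervalIntegrable F MeasureTheory.volume (ξ (n-1)) b :=
    bv_intervalIntegrable hF (uIcc_sub hξnmem hbmem)
  have hsplit : (∫ x in c..b, F x)
      = (∫ x in c..(ξ (n-1)), F x) + ∫ x in (ξ (n-1))..b, F x := by
    rw [intervalIntegral.integral_add_adjacent_intervals int1 int2]
  have hends2 : |∫ x in (ξ (n-1))..b, F x| ≤ M * δ := by
    have h1 := integral_bound hMb hξnmem hbmem
    have h2 : |b - ξ (n-1)| ≤ δ := by
      rw [abs_of_nonneg (by linarith [hξnmem.2])]
      have h3 := (hξ (n-1) hn1').1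
      have h4 := hm (n-1) hn1'
      rw [hn1, hb] at h4
      linarith
    calc _ ≤ M * |b - ξ (n-1)| := h1
    _ ≤ M * δ := mul_le_mul_of_nonneg_left h2 hM0
  have hFbb : |F b| ≤ M := hMb b hbmem
  have hvn' : ξ (n - 1) ⊔ c = ξ (n - 1) := max_eq_left hξnc
  have hend3 : |max (ξ (n-1) - c) 0 * F (t n) - (b - c) * F b| ≤ δ * M := by
    rw [hb, hfv, hvn']
    have h2 : |ξ (n-1) - b| ≤ δ := by
      rw [abs_of_nonpos (by linarith [hξnmem.2])]
      have h3 := (hξ (n-1) hn1').1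
      have h4 := hm (n-1) hn1'
      rw [hn1, hb] at h4
      linarith
    calc |(ξ (n-1) - c) * F b - (b - c) * F b| = |ξ (n-1) - b| * |F b| := by
          rw [← abs_mul]; ring_nf
    _ ≤ δ * M := mul_le_mul h2 hFbb (abs_nonneg _) (le_of_lt hδ0)
  have hzero0 : max (ξ 0 - c) 0 = 0 := max_eq_right (by linarith)
  -- middle sum rewrite: f(ξ(i+1)) - f(ξ i) = v(i+1) - v i
  have hmid : ∑ i ∈ range (n - 1), (max (ξ (i+1) - c) 0 - max (ξ i - c) 0) * F (t (i + 1))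
      = ∑ i ∈ range (n - 1), (v (i + 1) - v i) * F (t (i + 1)) := by
    apply Finset.sum_congr rfl
    intro i _
    rw [hfv, hfv]
    simp only [hv]; ring
  -- combine
  have key : |(∑ i ∈ range n, max (ξ i - c) 0 * (F (t (i + 1)) - F (t i)))
      - ((b - c) * F b - ∫ x in c..b, F x)| ≤ 6 * M * δ + 2 * δ * V := by
    rw [habel, hmid, hsplit, hzero0]
    have expand : max (ξ (n-1) - c) 0 * F (t n) - 0 * F (t 0)
        - ∑ i ∈ range (n - 1), (v (i + 1) - v i) * F (t (i + 1))
        - ((b - c) * F b - ((∫ x in c..(ξ (n-1)), F x) + ∫ x in (ξ (n-1))..b, F x))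
      = (max (ξ (n-1) - c) 0 * F (t n) - (b - c) * F b)
        - (∑ i ∈ range (n-1), (v (i + 1) - v i) * F (t (i + 1))
            - ∑ i ∈ range (n-1), F (τ i) * (v (i + 1) - v i))
        - (∑ i ∈ range (n-1), F (τ i) * (v (i + 1) - v i)
            - ∫ x in (v 0)..(v (n-1)), F x)
        - ((∫ x in (v 0)..(v (n-1)), F x) - ∫ x in c..(ξ (n-1)), F x)
        + ∫ x in (ξ (n-1))..b, F x := by ring
    rw [expand, hv0, hvn, sub_self, sub_zero]
    have t1 := abs_add_le (max (ξ (n-1) - c) 0 * F (t n) - (b - c) * F b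
        - (∑ i ∈ range (n-1), (v (i + 1) - v i) * F (t (i + 1))
            - ∑ i ∈ range (n-1), F (τ i) * (v (i + 1) - v i))
        - (∑ i ∈ range (n-1), F (τ i) * (v (i + 1) - v i)
            - ∫ x in c..(ξ (n-1)), F x)) (∫ x in (ξ (n-1))..b, F x)
    have t2 := abs_sub (max (ξ (n-1) - c) 0 * F (t n) - (b - c) * F b
        - (∑ i ∈ range (n-1), (v (i + 1) - v i) * F (t (i + 1))
            - ∑ i ∈ range (n-1), F (τ i) * (v (i + 1) - v i)))
        (∑ i ∈ range (n-1), F (τ i) * (v (i + 1) - v i) - ∫ x in c..(ξ (n-1)), F x)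
    have t3 := abs_sub (max (ξ (n-1) - c) 0 * F (t n) - (b - c) * F b)
        (∑ i ∈ range (n-1), (v (i + 1) - v i) * F (t (i + 1))
            - ∑ i ∈ range (n-1), F (τ i) * (v (i + 1) - v i))
    have hrs2' : |∑ i ∈ range (n-1), F (τ i) * (v (i + 1) - v i)
        - ∫ s in c..(ξ (n-1)), F s| ≤ 2 * δ * V := by
      rw [← hv0, ← hvn]; exact hrs2
    linarith
  calc |(∑ i ∈ range n, max (ξ i - c) 0 * (F (t (i + 1)) - F (t i)))
      - ((b - c) * F b - ∫ x in c..b, F x)| ≤ 6 * M * δ + 2 * δ * V := key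
  _ ≤ (ε / C) * (6 * M + 2 * V) := by nlinarith
  _ < (ε / C) * C := by
      apply mul_lt_mul_of_pos_left _ (by positivity)
      rw [hC]; linarith
  _ = ε := by field_simp
end
set_option maxHeartbeats 2000000 in
theorem reverse_dir (a b : ℝ) (hab : a < b) (F₁ F₂ : ℝ → ℝ)
    (hF₁ : BoundedVariationOn F₁ (Set.Icc a b))
    (hF₂ : BoundedVariationOn F₂ (Set.Icc a b))
    (ha : F₁ a = F₂ a) (hbb : F₁ b = F₂ b)
    (hI : (∫ x in a..b, F₁ x) = ∫ x in a..b, F₂ x)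
    (hIoo : ∀ x ∈ Set.Ioo a b, (∫ s in a..x, F₁ s) ≤ ∫ s in a..x, F₂ s)
    (f : ℝ → ℝ) (hfc : ContinuousOn f (Set.Icc a b)) (hfx : ConvexOn ℝ (Set.Icc a b) f)
    (I₁ I₂ : ℝ) (h₁ : IsRSIntegral f F₁ a b I₁) (h₂ : IsRSIntegral f F₂ a b I₂) :
    I₁ ≤ I₂ := by
  set V₁ := rvar F₁ a b with hV₁
  set V₂ := rvar F₂ a b with hV₂
  set M₁ := |F₁ a| + V₁ with hM₁
  set M₂ := |F₂ a| + V₂ with hM₂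
  have hV₁0 : 0 ≤ V₁ := ENNReal.toReal_nonneg
  have hV₂0 : 0 ≤ V₂ := ENNReal.toReal_nonneg
  have hM₁0 : 0 ≤ M₁ := by positivity
  have hM₂0 : 0 ≤ M₂ := by positivity
  have hM₁b := bv_bound (le_of_lt hab) hF₁
  have hM₂b := bv_bound (le_of_lt hab) hF₂
  set V := V₁ + V₂ with hVd
  set M := M₁ + M₂ with hMd
  have hV0 : 0 ≤ V := by positivity
  have hM0 : 0 ≤ M := by positivity
  set Cst := 3 * V + M + 3 with hCst
  have hCst0 : 0 < Cst := by positivity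
  apply le_of_forall_pos_le_add
  intro ε' hε'
  set ε := ε' / Cst with hεdef
  have hε : 0 < ε := by positivity
  obtain ⟨δ₁, hδ₁, hs₁⟩ := h₁ ε hε
  obtain ⟨δ₂, hδ₂, hs₂⟩ := h₂ ε hε
  have hucf := isCompact_Icc.uniformContinuousOn_of_continuous hfc
  rw [Metric.uniformContinuousOn_iff] at hucf
  obtain ⟨δf, hδf, hfuc⟩ := hucf ε hε
  set d0 := min δ₁ (min δ₂ δf) with hd0def
  have hd0 : 0 < d0 := lt_min hδ₁ (lt_min hδ₂ hδf)
  obtain ⟨n0, hn0⟩ := exists_nat_gt ((b - a) / d0)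
  set n := n0 + 2 with hndef
  have hn : 0 < n := by omega
  have hn2 : 2 ≤ n := by omega
  have hnr : (b - a) / d0 < n := by
    rw [hndef]; push_cast
    have : (n0 : ℝ) ≤ n0 + 2 := by linarith
    linarith
  obtain ⟨t, h0, hbn, hstep, htlt, tmem'⟩ := uniform_partition a b hab n hn
  set h := (b - a) / n with hhdef
  have hpos : 0 < h := div_pos (by linarith) (by positivity)
  have hhd0 : h < d0 := by
    rw [hhdef, div_lt_iff₀ (by positivity : (0:ℝ) < (n:ℝ))]
    calc b - a = ((b - a) / d0) * d0 := by field_simp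
    _ < n * d0 := by apply mul_lt_mul_of_pos_right hnr hd0
    _ = d0 * n := by ring
  have tmono : ∀ i j, i ≤ j → j ≤ n → t i ≤ t j :=
    chain_mono t n (fun i hi => le_of_lt (htlt i hi))
  have tmem : ∀ i, i ≤ n → t i ∈ Set.Icc a b := tmem'
  have hmesh : ∀ i < n, t (i + 1) - t i < d0 := fun i _ => (hstep i) ▸ hhd0
  have htaga : ∀ i < n, t i ∈ Set.Icc (t i) (t (i + 1)) :=
    fun i hi => ⟨le_refl _, le_of_lt (htlt i hi)⟩
  -- RS sums with left tags
  have hS₁ := hs₁ n t (fun i => t i) hn h0 hbn htlt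
    (fun i hi => lt_of_lt_of_le (hmesh i hi) (min_le_left _ _)) htaga
  have hS₂ := hs₂ n t (fun i => t i) hn h0 hbn htlt
    (fun i hi => lt_of_lt_of_le (hmesh i hi)
      (le_trans (min_le_right _ _) (min_le_left _ _))) htaga
  set S₁ := ∑ i ∈ range n, f (t i) * (F₁ (t (i + 1)) - F₁ (t i)) with hS₁def
  set S₂ := ∑ i ∈ range n, f (t i) * (F₂ (t (i + 1)) - F₂ (t i)) with hS₂def
  -- partial Riemann sums
  set K₁ : ℕ → ℝ := fun j => ∑ i ∈ range j, F₁ (t (i + 1)) * (t (i + 1) - t i) with hK₁def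
  set K₂ : ℕ → ℝ := fun j => ∑ i ∈ range j, F₂ (t (i + 1)) * (t (i + 1) - t i) with hK₂def
  set K : ℕ → ℝ := fun j => K₂ j - K₁ j with hKdef
  set d : ℕ → ℝ := fun i => f (t (i + 1)) - f (t i) with hddef
  -- Riemann sum error bounds
  have hrie : ∀ (F : ℝ → ℝ), BoundedVariationOn F (Set.Icc a b) → ∀ j, j ≤ n →
      |∑ i ∈ range j, F (t (i + 1)) * (t (i + 1) - t i) - ∫ s in a..(t j), F s|
        ≤ h * rvar F a b := by
    intro F hF j hj
    have humono : ∀ i < j, t i ≤ t (i + 1) :=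
      fun i hi => le_of_lt (htlt i (lt_of_lt_of_le hi hj))
    have hA : a ≤ t 0 := le_of_eq h0.symm
    have hB : t j ≤ b := (tmem j hj).2
    have herr := riemann_sum_err hF t (fun i => t (i + 1)) j h humono hA hB
      (fun i _ => le_of_eq (hstep i)) (fun i hi => ⟨humono i hi, le_refl _⟩)
    have hsum := rvar_sum_le hF t j humono hA hB
    have hrv : rvar F (t 0) (t j) ≤ rvar F a b :=
      ENNReal.toReal_mono hF (eVariationOn.mono F (Set.Icc_subset_Icc hA hB))
    rw [h0] at herr
    calc |∑ i ∈ range j, F (t (i + 1)) * (t (i + 1) - t i) - ∫ s in a..(t j), F s|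
        ≤ h * ∑ i ∈ range j, rvar F (t i) (t (i + 1)) := herr
    _ ≤ h * rvar F a b :=
        mul_le_mul_of_nonneg_left (le_trans hsum hrv) (le_of_lt hpos)
  -- lower bound for K j in the interior
  have hKlow : ∀ j, 1 ≤ j → j ≤ n - 1 → -(h * V) ≤ K j := by
    intro j hj1 hjn
    have hjn' : j ≤ n := by omega
    have htj : t j ∈ Set.Ioo a b := by
      constructor
      · calc a = t 0 := h0.symm
        _ < t 1 := htlt 0 hn
        _ ≤ t j := tmono 1 j hj1 hjn'
      · calc t j ≤ t (n - 1) := tmono j (n - 1) hjn (by omega)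
        _ < t n := by
            have := htlt (n - 1) (by omega)
            have heq : n - 1 + 1 = n := by omega
            rwa [heq] at this
        _ = b := hbn
    have hH : 0 ≤ (∫ s in a..(t j), F₂ s) - ∫ s in a..(t j), F₁ s :=
      sub_nonneg.mpr (hIoo (t j) htj)
    have e1 := hrie F₁ hF₁ j hjn'
    have e2 := hrie F₂ hF₂ j hjn'
    have e1' := abs_le.mp e1
    have e2' := abs_le.mp e2
    have : K j = (∑ i ∈ range j, F₂ (t (i + 1)) * (t (i + 1) - t i) - ∫ s in a..(t j), F₂ s)
        - (∑ i ∈ range j, F₁ (t (i + 1)) * (t (i + 1) - t i) - ∫ s in a..(t j), F₁ s)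
        + ((∫ s in a..(t j), F₂ s) - ∫ s in a..(t j), F₁ s) := by
      simp only [hKdef, hK₁def, hK₂def]
      ring
    rw [this, hVd]
    have := e1'.2
    have := e2'.1
    linarith [mul_nonneg (le_of_lt hpos) hV₁0, mul_nonneg (le_of_lt hpos) hV₂0]
  -- upper bound for K (n-1)
  have hKup : K (n - 1) ≤ h * V + h * M := by
    have hjn' : n - 1 ≤ n := by omega
    have e1 := abs_le.mp (hrie F₁ hF₁ (n - 1) hjn')
    have e2 := abs_le.mp (hrie F₂ hF₂ (n - 1) hjn')
    have htn1 : t (n - 1) ∈ Set.Icc a b := tmem (n - 1) hjn'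
    have hbmem : b ∈ Set.Icc a b := Set.right_mem_Icc.mpr (le_of_lt hab)
    have int1a : IntervalIntegrable F₁ MeasureTheory.volume a (t (n - 1)) :=
      bv_intervalIntegrable hF₁ (uIcc_sub (Set.left_mem_Icc.mpr (le_of_lt hab)) htn1)
    have int1b : IntervalIntegrable F₁ MeasureTheory.volume (t (n - 1)) b :=
      bv_intervalIntegrable hF₁ (uIcc_sub htn1 hbmem)
    have int2a : IntervalIntegrable F₂ MeasureTheory.volume a (t (n - 1)) :=
      bv_intervalIntegrable hF₂ (uIcc_sub (Set.left_mem_Icc.mpr (le_of_lt hab)) htn1)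
    have int2b : IntervalIntegrable F₂ MeasureTheory.volume (t (n - 1)) b :=
      bv_intervalIntegrable hF₂ (uIcc_sub htn1 hbmem)
    have hsplit1 : (∫ s in a..b, F₁ s)
        = (∫ s in a..(t (n - 1)), F₁ s) + ∫ s in (t (n - 1))..b, F₁ s :=
      (intervalIntegral.integral_add_adjacent_intervals int1a int1b).symm
    have hsplit2 : (∫ s in a..b, F₂ s)
        = (∫ s in a..(t (n - 1)), F₂ s) + ∫ s in (t (n - 1))..b, F₂ s :=
      (intervalIntegral.integral_add_adjacent_intervals int2a int2b).symm
    have hbt : |b - t (n - 1)| = h := by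
      have heq : n - 1 + 1 = n := by omega
      have := hstep (n - 1)
      rw [heq, hbn] at this
      rw [abs_of_nonneg (by linarith)]
      exact this
    have htail1 : |∫ s in (t (n - 1))..b, F₁ s| ≤ M₁ * h := by
      have := integral_bound hM₁b htn1 hbmem
      rw [hbt] at this
      exact this
    have htail2 : |∫ s in (t (n - 1))..b, F₂ s| ≤ M₂ * h := by
      have := integral_bound hM₂b htn1 hbmem
      rw [hbt] at this
      exact this
    have hH : (∫ s in a..(t (n - 1)), F₂ s) - ∫ s in a..(t (n - 1)), F₁ s
        ≤ M * h := by
      have hz : (∫ s in a..b, F₂ s) - ∫ s in a..b, F₁ s = 0 := by rw [hI]; ring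
      have h1 := abs_le.mp htail1
      have h2 := abs_le.mp htail2
      have hMh : M * h = M₁ * h + M₂ * h := by rw [hMd]; ring
      linarith [hsplit1, hsplit2, h1.1, h1.2, h2.1, h2.2]
    have hKH : K (n - 1) ≤ ((∫ s in a..(t (n - 1)), F₂ s) - ∫ s in a..(t (n - 1)), F₁ s)
        + h * V := by
      have : K (n - 1) = (∑ i ∈ range (n - 1), F₂ (t (i + 1)) * (t (i + 1) - t i)
            - ∫ s in a..(t (n - 1)), F₂ s)
          - (∑ i ∈ range (n - 1), F₁ (t (i + 1)) * (t (i + 1) - t i)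
            - ∫ s in a..(t (n - 1)), F₁ s)
          + ((∫ s in a..(t (n - 1)), F₂ s) - ∫ s in a..(t (n - 1)), F₁ s) := by
        simp only [hKdef, hK₁def, hK₂def]; ring
      rw [this, hVd]
      linarith [e1.1, e2.2]
    calc K (n - 1) ≤ ((∫ s in a..(t (n - 1)), F₂ s) - ∫ s in a..(t (n - 1)), F₁ s) + h * V :=
        hKH
    _ ≤ M * h + h * V := by linarith
    _ = h * V + h * M := by ring
  -- d is "increasing" (convexity), and endpoints small
  have hdmono : ∀ i, i + 2 ≤ n → d i ≤ d (i + 1) := by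
    intro i hi
    have hx : t i ∈ Set.Icc a b := tmem i (by omega)
    have hz : t (i + 2) ∈ Set.Icc a b := tmem (i + 2) hi
    have hmid : t (i + 1) = (1/2 : ℝ) * t i + (1/2 : ℝ) * t (i + 2) := by
      have e1 := hstep i
      have e2 := hstep (i + 1)
      linarith
    have hcv := hfx.2 hx hz (by norm_num : (0:ℝ) ≤ 1/2) (by norm_num : (0:ℝ) ≤ 1/2)
      (by norm_num)
    rw [smul_eq_mul, smul_eq_mul, smul_eq_mul, smul_eq_mul, ← hmid] at hcv
    simp only [hddef]
    linarith
  have hdsmall : ∀ i, i + 1 ≤ n → |d i| ≤ ε := by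
    intro i hi
    have h1 : t i ∈ Set.Icc a b := tmem i (by omega)
    have h2 : t (i + 1) ∈ Set.Icc a b := tmem (i + 1) hi
    have hd : dist (t (i + 1)) (t i) < δf := by
      rw [Real.dist_eq, abs_of_nonneg (by linarith [hstep i, hpos])]
      calc t (i + 1) - t i = h := hstep i
      _ < d0 := hhd0
      _ ≤ δf := le_trans (min_le_right _ _) (min_le_right _ _)
    have := hfuc (t (i + 1)) h2 (t i) h1 hd
    rw [Real.dist_eq] at this
    exact le_of_lt this
  -- Abel on the sum itself
  have hG0a : F₂ (t 0) - F₁ (t 0) = 0 := by rw [h0, ha]; ring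
  have hG0b : F₂ (t n) - F₁ (t n) = 0 := by rw [hbn, hbb]; ring
  have habel1 := abel_sum (fun i => f (t i)) (fun i => F₂ (t i) - F₁ (t i)) n hn
  have hSdiff : S₂ - S₁ = -∑ i ∈ range (n - 1), d i * (F₂ (t (i + 1)) - F₁ (t (i + 1))) := by
    have e0 : S₂ - S₁ = ∑ i ∈ range n,
        f (t i) * ((F₂ (t (i + 1)) - F₁ (t (i + 1))) - (F₂ (t i) - F₁ (t i))) := by
      rw [hS₂def, hS₁def, ← Finset.sum_sub_distrib]
      exact Finset.sum_congr rfl (fun i _ => by ring)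
    rw [e0, habel1, hG0a, hG0b]
    simp only [hddef]
    ring
  -- K increments
  have hKstep : ∀ i, K (i + 1) - K i = (F₂ (t (i + 1)) - F₁ (t (i + 1))) * h := by
    intro i
    simp only [hKdef, hK₁def, hK₂def, Finset.sum_range_succ]
    rw [hstep i]
    ring
  set m := n - 1 with hm
  have hm0 : 0 < m := by omega
  have habel2 := abel_sum d K m hm0
  have hW : ∑ i ∈ range m, d i * (K (i + 1) - K i)
      = h * ∑ i ∈ range m, d i * (F₂ (t (i + 1)) - F₁ (t (i + 1))) := by
    rw [Finset.mul_sum]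
    exact Finset.sum_congr rfl (fun i _ => by rw [hKstep i]; ring)
  have hK0 : K 0 = 0 := by simp [hKdef, hK₁def, hK₂def]
  have hT1 : d (m - 1) * K m ≤ ε * (h * (V + M)) := by
    have h1 : |d (m - 1)| ≤ ε := hdsmall (m - 1) (by omega)
    have h2 : |K m| ≤ h * (V + M) := by
      rw [abs_le]
      constructor
      · have := hKlow m (by omega) (by omega)
        have hMn : 0 ≤ h * M := mul_nonneg hpos.le hM0
        linarith
      · linarith [hKup]
    calc d (m - 1) * K m ≤ |d (m - 1) * K m| := le_abs_self _
    _ = |d (m - 1)| * |K m| := abs_mul _ _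
    _ ≤ ε * (h * (V + M)) := mul_le_mul h1 h2 (abs_nonneg _) hε.le
  have hT2 : -∑ i ∈ range (m - 1), (d (i + 1) - d i) * K (i + 1) ≤ 2 * ε * (h * V) := by
    have hstepb : ∀ i ∈ range (m - 1),
        -((d (i + 1) - d i) * K (i + 1)) ≤ (d (i + 1) - d i) * (h * V) := by
      intro i hi
      have hi' : i < m - 1 := Finset.mem_range.mp hi
      have hcoeff : 0 ≤ d (i + 1) - d i := by
        have := hdmono i (by omega)
        linarith
      have hKl : -(h * V) ≤ K (i + 1) := hKlow (i + 1) (by omega) (by omega)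
      calc -((d (i + 1) - d i) * K (i + 1)) = (d (i + 1) - d i) * (-K (i + 1)) := by ring
      _ ≤ (d (i + 1) - d i) * (h * V) := mul_le_mul_of_nonneg_left (by linarith) hcoeff
    calc -∑ i ∈ range (m - 1), (d (i + 1) - d i) * K (i + 1)
        = ∑ i ∈ range (m - 1), -((d (i + 1) - d i) * K (i + 1)) := by
          rw [← Finset.sum_neg_distrib]
      _ ≤ ∑ i ∈ range (m - 1), (d (i + 1) - d i) * (h * V) := Finset.sum_le_sum hstepb
      _ = (d (m - 1) - d 0) * (h * V) := by
          rw [← Finset.sum_mul, Finset.sum_range_sub d]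
      _ ≤ 2 * ε * (h * V) := by
          have h1 := abs_le.mp (hdsmall (m - 1) (by omega))
          have h2 := abs_le.mp (hdsmall 0 (by omega))
          calc (d (m - 1) - d 0) * (h * V) ≤ (2 * ε) * (h * V) :=
              mul_le_mul_of_nonneg_right (by linarith [h1.2, h2.1])
                (mul_nonneg hpos.le hV0)
          _ = 2 * ε * (h * V) := by ring
  have hWle : ∑ i ∈ range m, d i * (K (i + 1) - K i)
      ≤ ε * (h * (V + M)) + 2 * ε * (h * V) := by
    rw [habel2, hK0, mul_zero, sub_zero]
    linarith [hT1, hT2]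
  have hmain : -(ε * (3 * V + M)) ≤ S₂ - S₁ := by
    rw [hSdiff]
    have hXle : ∑ i ∈ range (n - 1), d i * (F₂ (t (i + 1)) - F₁ (t (i + 1)))
        ≤ ε * (3 * V + M) := by
      have hq := hWle
      rw [hW] at hq
      have he : ε * (h * (V + M)) + 2 * ε * (h * V) = h * (ε * (3 * V + M)) := by ring
      rw [he] at hq
      exact le_of_mul_le_mul_left hq hpos
    linarith
  have e1 := abs_lt.mp hS₁
  have e2 := abs_lt.mp hS₂
  have hfin : ε * Cst = ε' := by
    rw [hεdef]
    field_simp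
  have hexp : ε * Cst = ε * (3 * V + M) + 3 * ε := by rw [hCst]; ring
  linarith [e1.2, e2.1, hmain, hε.le]
lemma convexOn_sub_const (a b x : ℝ) : ConvexOn ℝ (Set.Icc a b) (fun y => y - x) := by
  refine ⟨convex_Icc a b, fun y _ z _ α β hα hβ hαβ => ?_⟩
  simp only [smul_eq_mul]
  have hx' : α * x + β * x = x := by linear_combination x * hαβ
  linarith

lemma convexOn_negid (a b : ℝ) : ConvexOn ℝ (Set.Icc a b) (fun y : ℝ => -y) := by
  refine ⟨convex_Icc a b, fun y _ z _ α β hα hβ hαβ => le_of_eq ?_⟩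
  simp only [smul_eq_mul]
  ring

lemma convexOn_hinge (a b x : ℝ) : ConvexOn ℝ (Set.Icc a b) (fun y => max (y - x) 0) := by
  refine ⟨convex_Icc a b, fun y _ z _ α β hα hβ hαβ => ?_⟩
  simp only [smul_eq_mul]
  have hx' : α * x + β * x = x := by linear_combination x * hαβ
  apply max_le
  · have t1 := mul_le_mul_of_nonneg_left (le_max_left (y - x) 0) hα
    have t2 := mul_le_mul_of_nonneg_left (le_max_left (z - x) 0) hβ
    nlinarith
  · have t1 := mul_nonneg hα (le_max_right (y - x) 0)
    have t2 := mul_nonneg hβ (le_max_right (z - x) 0)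
    linarith

theorem forward_dir (a b : ℝ) (hab : a < b) (F₁ F₂ : ℝ → ℝ)
    (hF₁ : BoundedVariationOn F₁ (Set.Icc a b))
    (hF₂ : BoundedVariationOn F₂ (Set.Icc a b))
    (ha : F₁ a = F₂ a)
    (hyp : ∀ f : ℝ → ℝ, ContinuousOn f (Set.Icc a b) → ConvexOn ℝ (Set.Icc a b) f →
      ∀ I₁ I₂ : ℝ, IsRSIntegral f F₁ a b I₁ → IsRSIntegral f F₂ a b I₂ → I₁ ≤ I₂) :
    (F₁ b = F₂ b ∧
      (∫ x in a..b, F₁ x) = ∫ x in a..b, F₂ x ∧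
      ∀ x ∈ Set.Ioo a b, (∫ t in a..x, F₁ t) ≤ ∫ t in a..x, F₂ t) := by
  -- part 1
  have i1 := hyp (fun _ => (1:ℝ)) continuousOn_const (convexOn_const 1 (convex_Icc a b))
    _ _ (isRS_const 1 F₁ a b) (isRS_const 1 F₂ a b)
  have i2 := hyp (fun _ => (-1:ℝ)) continuousOn_const (convexOn_const (-1) (convex_Icc a b))
    _ _ (isRS_const (-1) F₁ a b) (isRS_const (-1) F₂ a b)
  have hb : F₁ b = F₂ b := by linarith
  refine ⟨hb, ?_, ?_⟩
  -- part 2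
  · have i3 := hyp (fun y => y) continuousOn_id (convexOn_id (convex_Icc a b))
      _ _ (isRS_id hab hF₁) (isRS_id hab hF₂)
    have i4 := hyp (fun y => -((fun x : ℝ => x) y)) (continuousOn_id.neg)
      (convexOn_negid a b)
      _ _ (isRS_neg (isRS_id hab hF₁)) (isRS_neg (isRS_id hab hF₂))
    have e1 : b * F₁ b = b * F₂ b := by rw [hb]
    have e2 : a * F₁ a = a * F₂ a := by rw [ha]
    linarith
  -- part 3
  · intro x hx
    have heq : (∫ s in a..b, F₁ s) = ∫ s in a..b, F₂ s := by
      have i3 := hyp (fun y => y) continuousOn_id (convexOn_id (convex_Icc a b))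
        _ _ (isRS_id hab hF₁) (isRS_id hab hF₂)
      have i4 := hyp (fun y => -((fun x : ℝ => x) y)) (continuousOn_id.neg)
        (convexOn_negid a b)
        _ _ (isRS_neg (isRS_id hab hF₁)) (isRS_neg (isRS_id hab hF₂))
      have e1 : b * F₁ b = b * F₂ b := by rw [hb]
      have e2 : a * F₁ a = a * F₂ a := by rw [ha]
      linarith
    have hcont : ContinuousOn (fun y => max (y - x) 0) (Set.Icc a b) :=
      ((continuous_id.sub continuous_const).max continuous_const).continuousOn
    have i5 := hyp (fun y => max (y - x) 0) hcont (convexOn_hinge a b x)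
      _ _ (isRS_hinge hab hx hF₁) (isRS_hinge hab hx hF₂)
    have hxm : x ∈ Set.Icc a b := ⟨le_of_lt hx.1, le_of_lt hx.2⟩
    have ham : a ∈ Set.Icc a b := Set.left_mem_Icc.mpr (le_of_lt hab)
    have hbm : b ∈ Set.Icc a b := Set.right_mem_Icc.mpr (le_of_lt hab)
    have s1 : (∫ s in a..b, F₁ s) = (∫ s in a..x, F₁ s) + ∫ s in x..b, F₁ s :=
      (intervalIntegral.integral_add_adjacent_intervals
        (bv_intervalIntegrable hF₁ (uIcc_sub ham hxm))
        (bv_intervalIntegrable hF₁ (uIcc_sub hxm hbm))).symm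
    have s2 : (∫ s in a..b, F₂ s) = (∫ s in a..x, F₂ s) + ∫ s in x..b, F₂ s :=
      (intervalIntegral.integral_add_adjacent_intervals
        (bv_intervalIntegrable hF₂ (uIcc_sub ham hxm))
        (bv_intervalIntegrable hF₂ (uIcc_sub hxm hbm))).symm
    have hthis : (b - x) * F₁ b - (∫ s in x..b, F₁ s) ≤ (b - x) * F₂ b - ∫ s in x..b, F₂ s := i5
    have e3 : (b - x) * F₁ b = (b - x) * F₂ b := by rw [hb]
    linarith [hthis, e3, s1, s2, heq]

theorem levin_steckin (a b : ℝ) (hab : a < b) (F₁ F₂ : ℝ → ℝ)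
    (hF₁ : BoundedVariationOn F₁ (Set.Icc a b))
    (hF₂ : BoundedVariationOn F₂ (Set.Icc a b))
    (ha : F₁ a = F₂ a) :
    (∀ f : ℝ → ℝ, ContinuousOn f (Set.Icc a b) → ConvexOn ℝ (Set.Icc a b) f →
      ∀ I₁ I₂ : ℝ, IsRSIntegral f F₁ a b I₁ → IsRSIntegral f F₂ a b I₂ → I₁ ≤ I₂) ↔
    (F₁ b = F₂ b ∧
      (∫ x in a..b, F₁ x) = ∫ x in a..b, F₂ x ∧
      ∀ x ∈ Set.Ioo a b, (∫ t in a..x, F₁ t) ≤ ∫ t in a..x, F₂ t) := by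
  constructor
  · exact forward_dir a b hab F₁ F₂ hF₁ hF₂ ha
  · rintro ⟨hb, hI, hIoo⟩ f hfc hfx I₁ I₂ h₁ h₂
    exact reverse_dir a b hab F₁ F₂ hF₁ hF₂ ha hb hI hIoo f hfc hfx I₁ I₂ h₁ h₂
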